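/- The star product ⋆_A on MvPolynomial (Fin n) R is commutative if and only if the matrix A is symmetric: if Aᵀ = A then f ⋆_A g = g ⋆_A f for all polynomials f, g, and conversely, if f ⋆_A g = g ⋆_A f for all f, g, then A_{i j} = A_{j i} for all indices i, j. -/
import Mathlib


open MvPolynomial

/-- Iterated formal partial derivative `∂_{i 0} ⋯ ∂_{i (k-1)} f`. -/
noncomputable def pdMulti {n : ℕ} {R : Type*} [CommRing R] {k : ℕ}
    (i : Fin k → Fin n) (f : MvPolynomial (Fin n) R) : MvPolynomial (Fin n) R :=
  (List.ofFn i).foldl (fun p a => pderiv a p) f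

/-- The star product `f ⋆_A g` associated to a matrix `A`. -/
noncomputable def mstar {n : ℕ} {R : Type*} [CommRing R] [Algebra ℚ R]
    (A : Matrix (Fin n) (Fin n) R) (f g : MvPolynomial (Fin n) R) :
    MvPolynomial (Fin n) R :=
  ∑ᶠ k : ℕ, (k.factorial : ℚ)⁻¹ •
    ∑ i : Fin k → Fin n, ∑ j : Fin k → Fin n,
      (∏ r, A (i r) (j r)) • (pdMulti i f * pdMulti j g)

lemma foldl_pderiv_zero {n : ℕ} {R : Type*} [CommRing R] (l : List (Fin n)) :
    l.foldl (fun p a => pderiv a p) (0 : MvPolynomial (Fin n) R) = 0 := by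
  induction l with
  | nil => rfl
  | cons a l ih => simp [List.foldl_cons, ih]

lemma pdMulti_X_eq_zero {n : ℕ} {R : Type*} [CommRing R] {k : ℕ} (hk : 2 ≤ k)
    (i : Fin k → Fin n) (a : Fin n) :
    pdMulti i (X a : MvPolynomial (Fin n) R) = 0 := by
  obtain ⟨m, rfl⟩ : ∃ m, k = m + 2 := ⟨k - 2, by omega⟩
  unfold pdMulti
  rw [List.ofFn_succ, List.ofFn_succ]
  simp only [List.foldl_cons]
  have h1 : (pderiv (i 0) (X a : MvPolynomial (Fin n) R)) = C (if i 0 = a then 1 else 0) := by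
    classical
    rcases eq_or_ne (i 0) a with h | h
    · simp [h]
    · simp [h, Ne.symm h]
  rw [h1, pderiv_C]
  exact foldl_pderiv_zero _

lemma pdMulti_zero {n : ℕ} {R : Type*} [CommRing R]
    (i : Fin 0 → Fin n) (f : MvPolynomial (Fin n) R) : pdMulti i f = f := rfl

lemma pdMulti_one {n : ℕ} {R : Type*} [CommRing R]
    (i : Fin 1 → Fin n) (f : MvPolynomial (Fin n) R) : pdMulti i f = pderiv (i 0) f := by
  simp [pdMulti, List.ofFn_succ]

lemma pdMulti_one_X {n : ℕ} {R : Type*} [CommRing R]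
    (v c : Fin n) : pdMulti (fun _ : Fin 1 => v) (X c : MvPolynomial (Fin n) R)
      = if v = c then 1 else 0 := by
  rw [pdMulti_one]
  rcases eq_or_ne v c with h | h
  · simp [h]
  · simp [h, Ne.symm h]

lemma mstar_X_X {n : ℕ} {R : Type*} [CommRing R] [Algebra ℚ R]
    (A : Matrix (Fin n) (Fin n) R) (a b : Fin n) :
    mstar A (X a) (X b) = X a * X b + C (A a b) := by
  unfold mstar
  have hsupp : (Function.support fun k : ℕ => (k.factorial : ℚ)⁻¹ •
      ∑ i : Fin k → Fin n, ∑ j : Fin k → Fin n,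
        (∏ r, A (i r) (j r)) • (pdMulti i (X a : MvPolynomial (Fin n) R) * pdMulti j (X b)))
      ⊆ ({0, 1} : Finset ℕ) := by
    intro k hk
    simp only [Function.mem_support] at hk
    by_contra hmem
    simp only [Finset.coe_insert, Finset.coe_singleton, Set.mem_insert_iff,
      Set.mem_singleton_iff, not_or] at hmem
    have h2 : 2 ≤ k := by omega
    apply hk
    simp [pdMulti_X_eq_zero h2]
  rw [finsum_eq_sum_of_support_subset _ hsupp]
  rw [Finset.sum_insert (by simp), Finset.sum_singleton]
  have h0 : ((0:ℕ).factorial : ℚ)⁻¹ •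
      ∑ i : Fin 0 → Fin n, ∑ j : Fin 0 → Fin n,
        (∏ r, A (i r) (j r)) • (pdMulti i (X a : MvPolynomial (Fin n) R) * pdMulti j (X b))
      = X a * X b := by
    simp [pdMulti_zero]
  have h1 : ((1:ℕ).factorial : ℚ)⁻¹ •
      ∑ i : Fin 1 → Fin n, ∑ j : Fin 1 → Fin n,
        (∏ r, A (i r) (j r)) • (pdMulti i (X a : MvPolynomial (Fin n) R) * pdMulti j (X b))
      = C (A a b) := by
    have e : ∀ (F : (Fin 1 → Fin n) → MvPolynomial (Fin n) R),
        ∑ i : Fin 1 → Fin n, F i = ∑ v : Fin n, F (fun _ => v) := by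
      intro F
      exact (Equiv.sum_comp (Equiv.funUnique (Fin 1) (Fin n)).symm F).symm
    rw [e]
    simp only [e, Fin.prod_univ_one, pdMulti_one_X]
    rw [Finset.sum_eq_single a]
    · rw [Finset.sum_eq_single b]
      · simp [smul_eq_C_mul]
      · intro w _ hw; simp [hw]
      · simp
    · intro v _ hv; simp [hv]
    · simp
  rw [h0, h1]

/-- The star product `⋆_A` is commutative if and only if `A` is symmetric. -/
theorem mstar_comm_iff_symm {n : ℕ} {R : Type*} [CommRing R] [Algebra ℚ R]
    (A : Matrix (Fin n) (Fin n) R) :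
    (A.transpose = A → ∀ f g : MvPolynomial (Fin n) R, mstar A f g = mstar A g f) ∧
    ((∀ f g : MvPolynomial (Fin n) R, mstar A f g = mstar A g f) →
      ∀ i j : Fin n, A i j = A j i) := by
  constructor
  · intro hA f g
    have hs : ∀ x y : Fin n, A x y = A y x := fun x y => by
      conv_lhs => rw [← hA]
      exact Matrix.transpose_apply A x y
    unfold mstar
    refine finsum_congr fun k => ?_
    congr 1
    rw [Finset.sum_comm]
    refine Finset.sum_congr rfl fun u _ => Finset.sum_congr rfl fun v _ => ?_
    rw [mul_comm]
    congr 1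
    exact Finset.prod_congr rfl fun r _ => hs _ _
  · intro h i j
    have := h (X i) (X j)
    rw [mstar_X_X, mstar_X_X, mul_comm (X j : MvPolynomial (Fin n) R)] at this
    exact C_injective _ _ (add_left_cancel this)
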